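/- For every integer N ≥ 2, the cubic polynomial P_N has a root z in the open interval (0, 2N²(N−1)/(3N+1)), i.e. there exists z with 0 < z < 2N²(N−1)/(3N+1) and P_N(z) = 0. -/
import Mathlib


/-- For every integer `N ≥ 2`, the cubic polynomial `P_N` has a root in the
open interval `(0, 2N²(N−1)/(3N+1))`. -/
theorem cubic_has_root (N : ℕ) (hN : 2 ≤ N) :
    ∃ z : ℝ, 0 < z ∧ z < 2 * (N : ℝ) ^ 2 * ((N : ℝ) - 1) / (3 * (N : ℝ) + 1) ∧
      8 * (N : ℝ) ^ 6 * z ^ 3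
        + (-16 * (N : ℝ) ^ 7 + 4 * (N : ℝ) ^ 6 + 48 * (N : ℝ) ^ 5 - 52 * (N : ℝ) ^ 4
            + 8 * (N : ℝ) ^ 3 + 20 * (N : ℝ) ^ 2 - 8 * (N : ℝ) - 4) * z ^ 2
        + (8 * (N : ℝ) ^ 8 - 20 * (N : ℝ) ^ 7 + 46 * (N : ℝ) ^ 6 - 112 * (N : ℝ) ^ 5
            + 114 * (N : ℝ) ^ 4 - 4 * (N : ℝ) ^ 3 - 46 * (N : ℝ) ^ 2 + 8 * (N : ℝ) + 6) * z
        - 9 * (N : ℝ) ^ 8 + 48 * (N : ℝ) ^ 7 - 100 * (N : ℝ) ^ 6 + 96 * (N : ℝ) ^ 5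
        - 30 * (N : ℝ) ^ 4 - 16 * (N : ℝ) ^ 3 + 12 * (N : ℝ) ^ 2 - 1 = 0 := by
  set x : ℝ := (N : ℝ) with hx
  have hx2 : (2 : ℝ) ≤ x := by
    rw [hx]; exact_mod_cast hN
  have ht : (0 : ℝ) ≤ x - 2 := by linarith
  set f : ℝ → ℝ := fun z =>
      8 * x ^ 6 * z ^ 3
        + (-16 * x ^ 7 + 4 * x ^ 6 + 48 * x ^ 5 - 52 * x ^ 4
            + 8 * x ^ 3 + 20 * x ^ 2 - 8 * x - 4) * z ^ 2
        + (8 * x ^ 8 - 20 * x ^ 7 + 46 * x ^ 6 - 112 * x ^ 5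
            + 114 * x ^ 4 - 4 * x ^ 3 - 46 * x ^ 2 + 8 * x + 6) * z
        - 9 * x ^ 8 + 48 * x ^ 7 - 100 * x ^ 6 + 96 * x ^ 5
        - 30 * x ^ 4 - 16 * x ^ 3 + 12 * x ^ 2 - 1 with hf
  set b : ℝ := 2 * x ^ 2 * (x - 1) / (3 * x + 1) with hb
  have hden : (0 : ℝ) < 3 * x + 1 := by linarith
  have hbpos : 0 < b := by
    apply div_pos _ hden
    nlinarith [sq_nonneg x]
  have hf0 : f 0 < 0 := by
    simp only [hf]
    nlinarith [pow_nonneg ht 2, pow_nonneg ht 3, pow_nonneg ht 4, pow_nonneg ht 5,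
      pow_nonneg ht 6, pow_nonneg ht 7, pow_nonneg ht 8, ht]
  have hQ : f b = (64*x^15 - 384*x^14 + 704*x^13 - 40*x^12 - 1007*x^11 + 289*x^10
      + 883*x^9 - 85*x^8 - 566*x^7 - 118*x^6 + 198*x^5 + 110*x^4 - 11*x^3
      - 27*x^2 - 9*x - 1) / (3 * x + 1) ^ 3 := by
    simp only [hf, hb]
    field_simp
    ring
  have hfb : 0 < f b := by
    rw [hQ]
    apply div_pos _ (by positivity)
    nlinarith [pow_nonneg ht 2, pow_nonneg ht 3, pow_nonneg ht 4, pow_nonneg ht 5,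
      pow_nonneg ht 6, pow_nonneg ht 7, pow_nonneg ht 8, pow_nonneg ht 9,
      pow_nonneg ht 10, pow_nonneg ht 11, pow_nonneg ht 12, pow_nonneg ht 13,
      pow_nonneg ht 14, pow_nonneg ht 15, ht]
  have hcont : ContinuousOn f (Set.Icc 0 b) := by
    apply Continuous.continuousOn
    simp only [hf]
    fun_prop
  have h0 : (0 : ℝ) ∈ Set.Ioo (f 0) (f b) := ⟨hf0, hfb⟩
  have := intermediate_value_Ioo hbpos.le hcont h0
  obtain ⟨z, hz, hfz⟩ := this
  exact ⟨z, hz.1, hz.2, hfz⟩
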